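/- If a timed language L is both S-invariant and S'-invariant for finite subsets S, S' ⊆ ℝ≥0, then L is S''-invariant where S'' = frac(S) ∩ frac(S') is the intersection of the sets of fractional parts of S and S'. -/

import Mathlib

/-- A timed automorphism: a monotone bijection `π : ℝ → ℝ` with `π (x+1) = π x + 1`. -/
def IsTimedAutomorphism (π : ℝ → ℝ) : Prop :=
  Function.Bijective π ∧ StrictMono π ∧ ∀ x : ℝ, π (x + 1) = π x + 1

/-- An `S`-timed automorphism: a timed automorphism fixing every point of `S`. -/
def IsSTimedAutomorphism (S : Set ℝ) (π : ℝ → ℝ) : Prop :=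
  IsTimedAutomorphism π ∧ ∀ t ∈ S, π t = t

/-- A timed word: a finite sequence of letters with nonnegative, nondecreasing timestamps. -/
def IsTimedWord {A : Type*} (w : List (A × ℝ)) : Prop :=
  (∀ p ∈ w, 0 ≤ p.2) ∧ (w.map Prod.snd).Chain' (· ≤ ·)

/-- Pointwise action of a real function on the timestamps of a timed word. -/
def mapTW {A : Type*} (π : ℝ → ℝ) (w : List (A × ℝ)) : List (A × ℝ) :=
  w.map fun p => (p.1, π p.2)

/-- `S`-invariance of a timed language: every `S`-timed automorphism preserves
membership (on timed words whose image is again a timed word). -/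
def SInvariantLang {A : Type*} (S : Set ℝ) (L : Set (List (A × ℝ))) : Prop :=
  ∀ π, IsSTimedAutomorphism S π → ∀ w, IsTimedWord w → IsTimedWord (mapTW π w) →
    (w ∈ L ↔ mapTW π w ∈ L)

noncomputable section TimedAuxSection

namespace TimedAux

open Function

/-- integer-commuting shift -/
lemma map_add_int {f : ℝ → ℝ} (hf : ∀ x, f (x + 1) = f x + 1) (x : ℝ) (n : ℤ) :
    f (x + n) = f x + n := by
  have hper : Function.Periodic (fun x => f x - x) 1 := by
    intro y; simp only []; rw [hf y]; ring
  have := (hper.int_mul n) x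
  simp only [mul_one] at this
  have h2 : f (x + n) - (x + n) = f x - x := this
  linarith

lemma periodic_add_int {f : ℝ → ℝ} (hf : ∀ x, f (x + 1) = f x) (x : ℝ) (n : ℤ) :
    f (x + n) = f x := by
  have hper : Function.Periodic f 1 := hf
  have := (hper.int_mul n) x
  simpa using this

/-- distance to the nearest integer -/
def distInt (y : ℝ) : ℝ := |y - round y|

lemma distInt_nonneg (y : ℝ) : 0 ≤ distInt y := abs_nonneg _

lemma distInt_le (y : ℝ) (n : ℤ) : distInt y ≤ |y - n| := by
  rcases eq_or_ne n (round y) with h | h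
  · simp [distInt, h]
  · have h1 : |y - round y| ≤ 1/2 := abs_sub_round y
    have h2 : (1 : ℝ) ≤ |(n : ℝ) - round y| := by
      have : (1:ℤ) ≤ |n - round y| := Int.one_le_abs (sub_ne_zero.mpr h)
      calc (1:ℝ) ≤ ((|n - round y| : ℤ) : ℝ) := by exact_mod_cast this
        _ = |(n:ℝ) - round y| := by push_cast; ring_nf
    have h3 : |(n:ℝ) - round y| ≤ |y - n| + |y - round y| := by
      calc |(n:ℝ) - round y| = |((n:ℝ) - y) + (y - round y)| := by ring_nf
        _ ≤ |(n:ℝ) - y| + |y - round y| := abs_add_le _ _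
        _ = |y - n| + |y - round y| := by rw [abs_sub_comm]
    have h4 : 1/2 ≤ |y - n| := by linarith
    calc distInt y ≤ 1/2 := h1
      _ ≤ |y - n| := h4

lemma distInt_intCast (n : ℤ) : distInt n = 0 := by
  simp [distInt]

lemma distInt_add_int (y : ℝ) (n : ℤ) : distInt (y + n) = distInt y := by
  simp only [distInt, round_add_intCast]
  congr 1
  push_cast
  ring

lemma distInt_lipschitz (a b : ℝ) : |distInt a - distInt b| ≤ |a - b| := by
  have key : ∀ u v : ℝ, distInt u ≤ |u - v| + distInt v := by
    intro u v
    calc distInt u ≤ |u - round v| := distInt_le u (round v)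
      _ = |(u - v) + (v - round v)| := by ring_nf
      _ ≤ |u - v| + |v - round v| := abs_add_le _ _
      _ = |u - v| + distInt v := rfl
  have h1 := key a b
  have h2 := key b a
  rw [abs_sub_comm b a] at h2
  rw [abs_sub_le_iff]
  constructor <;> linarith

lemma distInt_pos {y : ℝ} (h0 : y ≠ 0) (h1 : |y| < 1) : 0 < distInt y := by
  rcases (distInt_nonneg y).lt_or_eq with h | h
  · exact h
  · exfalso
    have hy : y = round y := by
      have := abs_eq_zero.mp h.symm
      linarith
    have : |(round y : ℝ)| < 1 := by rw [← hy]; exact h1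
    have h2 : |round y| < 1 := by exact_mod_cast this
    have := Int.abs_lt_one_iff.mp h2
    apply h0
    rw [hy, this, Int.cast_zero]

/-- periodic hat function centered at `p`, width `δ`, height 1 -/
def hat (δ p x : ℝ) : ℝ := max (1 - distInt (x - p) / δ) 0

lemma hat_nonneg (δ p x : ℝ) : 0 ≤ hat δ p x := le_max_right _ _

lemma hat_le_one {δ : ℝ} (hδ : 0 < δ) (p x : ℝ) : hat δ p x ≤ 1 := by
  apply max_le _ (by norm_num)
  have h := distInt_nonneg (x - p)
  have : 0 ≤ distInt (x - p) / δ := div_nonneg h hδ.le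
  linarith

lemma hat_self (δ p : ℝ) : hat δ p p = 1 := by
  have h : distInt (p - p) = 0 := by
    have := distInt_intCast 0; simpa using this
  have h2 : (1 : ℝ) - distInt (p - p) / δ = 1 := by rw [h]; simp
  unfold hat; rw [h2]; simp

lemma hat_eq_zero {δ p x : ℝ} (hδ : 0 < δ) (h : δ ≤ distInt (x - p)) : hat δ p x = 0 := by
  apply max_eq_right
  have : 1 ≤ distInt (x - p) / δ := (one_le_div hδ).mpr h
  linarith

lemma hat_add_one (δ p x : ℝ) : hat δ p (x + 1) = hat δ p x := by
  unfold hat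
  have h : x + 1 - p = (x - p) + ((1:ℤ) : ℝ) := by push_cast; ring
  rw [h, distInt_add_int]

lemma hat_lipschitz {δ : ℝ} (hδ : 0 < δ) (p x y : ℝ) :
    |hat δ p y - hat δ p x| ≤ |y - x| / δ := by
  have h1 : |hat δ p y - hat δ p x| ≤
      |(1 - distInt (y - p) / δ) - (1 - distInt (x - p) / δ)| :=
    abs_max_sub_max_le_abs _ _ 0
  have h2 : (1 - distInt (y - p) / δ) - (1 - distInt (x - p) / δ)
      = (distInt (x - p) - distInt (y - p)) / δ := by ring
  rw [h2, abs_div, abs_of_pos hδ] at h1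
  have h3 : |distInt (x - p) - distInt (y - p)| ≤ |x - y| :=
    (distInt_lipschitz _ _).trans (by rw [show x - p - (y - p) = x - y by ring])
  calc |hat δ p y - hat δ p x| ≤ |distInt (x - p) - distInt (y - p)| / δ := h1
    _ ≤ |x - y| / δ := by gcongr
    _ = |y - x| / δ := by rw [abs_sub_comm]

lemma hat_continuous {δ : ℝ} (hδ : 0 < δ) (p : ℝ) : Continuous (hat δ p) := by
  have : LipschitzWith (Real.toNNReal (1/δ)) (hat δ p) := by
    apply LipschitzWith.of_dist_le_mul
    intro x y
    rw [Real.dist_eq, Real.dist_eq]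
    have h := hat_lipschitz hδ p y x
    rw [Real.coe_toNNReal _ (by positivity)]
    calc |hat δ p x - hat δ p y| ≤ |x - y| / δ := h
      _ = 1/δ * |x - y| := by ring
  exact this.continuous

variable (F : Finset ℝ) (δ : ℝ) (c : ℝ → ℝ)

/-- piecewise "bump sum" displacement -/
def dd (x : ℝ) : ℝ := ∑ p ∈ F, c p * hat δ p x

lemma dd_add_one (x : ℝ) : dd F δ c (x + 1) = dd F δ c x := by
  unfold dd; exact Finset.sum_congr rfl fun p _ => by rw [hat_add_one]

lemma dd_bound {ε : ℝ} (hδ : 0 < δ) (hε : 0 ≤ ε) (hc : ∀ p ∈ F, |c p| ≤ ε) (x : ℝ) :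
    |dd F δ c x| ≤ F.card * ε := by
  calc |dd F δ c x| ≤ ∑ p ∈ F, |c p * hat δ p x| := Finset.abs_sum_le_sum_abs _ _
    _ ≤ ∑ _p ∈ F, ε := by
        apply Finset.sum_le_sum
        intro p hp
        rw [abs_mul]
        calc |c p| * |hat δ p x| ≤ ε * 1 := by
              apply mul_le_mul (hc p hp) _ (abs_nonneg _) hε
              rw [abs_of_nonneg (hat_nonneg _ _ _)]; exact hat_le_one hδ _ _
          _ = ε := mul_one ε
    _ = F.card * ε := by rw [Finset.sum_const, nsmul_eq_mul]

lemma dd_lip {ε : ℝ} (hδ : 0 < δ) (hε : 0 ≤ ε) (hc : ∀ p ∈ F, |c p| ≤ ε) (x y : ℝ) :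
    |dd F δ c y - dd F δ c x| ≤ (F.card * ε / δ) * |y - x| := by
  unfold dd
  rw [← Finset.sum_sub_distrib]
  calc |∑ p ∈ F, (c p * hat δ p y - c p * hat δ p x)|
      ≤ ∑ p ∈ F, |c p * hat δ p y - c p * hat δ p x| := Finset.abs_sum_le_sum_abs _ _
    _ ≤ ∑ _p ∈ F, ε * (|y - x| / δ) := by
        apply Finset.sum_le_sum
        intro p hp
        rw [← mul_sub, abs_mul]
        exact mul_le_mul (hc p hp) (hat_lipschitz hδ p x y) (abs_nonneg _) hε
    _ = F.card * (ε * (|y - x| / δ)) := by rw [Finset.sum_const, nsmul_eq_mul]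
    _ = (F.card * ε / δ) * |y - x| := by ring

lemma dd_node (hδ : 0 < δ)
    (hsep : ∀ p ∈ F, ∀ q ∈ F, p ≠ q → δ ≤ distInt (q - p)) {q : ℝ} (hq : q ∈ F) :
    dd F δ c q = c q := by
  unfold dd
  rw [Finset.sum_eq_single q]
  · rw [hat_self, mul_one]
  · intro p hp hne
    rw [hat_eq_zero hδ (hsep p hp q hq hne), mul_zero]
  · intro h; exact absurd hq h

lemma dd_continuous (hδ : 0 < δ) : Continuous (dd F δ c) := by
  unfold dd
  exact continuous_finset_sum _ fun p _ => continuous_const.mul (hat_continuous hδ p)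

lemma tau_strictMono {d : ℝ → ℝ} (hlip : ∀ x y : ℝ, |d y - d x| ≤ (1/2) * |y - x|) :
    StrictMono (fun x => x + d x) := by
  intro x y hxy
  have h := hlip x y
  rw [abs_of_pos (sub_pos.mpr hxy)] at h
  have h2 := abs_le.mp h
  simp only []
  nlinarith [h2.1, h2.2]

lemma tau_surjective {d : ℝ → ℝ} {C : ℝ} (hcont : Continuous d) (hbd : ∀ x, |d x| ≤ C) :
    Function.Surjective (fun x => x + d x) := by
  intro y
  have hC : 0 ≤ C := (abs_nonneg _).trans (hbd 0)
  have h1 : (fun x => x + d x) (y - C) ≤ y := by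
    have := (abs_le.mp (hbd (y - C))).2
    simp only []; linarith
  have h2 : y ≤ (fun x => x + d x) (y + C) := by
    have := (abs_le.mp (hbd (y + C))).1
    simp only []; linarith
  have hc : ContinuousOn (fun x => x + d x) (Set.Icc (y - C) (y + C)) :=
    (continuous_id.add hcont).continuousOn
  obtain ⟨x, _, hx⟩ := intermediate_value_Icc (by linarith : y - C ≤ y + C) hc ⟨h1, h2⟩
  exact ⟨x, hx⟩

lemma orderIso_symm_add_one (e : ℝ ≃o ℝ) (h : ∀ x, e (x + 1) = e x + 1) (y : ℝ) :
    e.symm (y + 1) = e.symm y + 1 := by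
  apply e.injective
  rw [e.apply_symm_apply, h, e.apply_symm_apply]

lemma isTimedWord_mapTW {A : Type*} {f : ℝ → ℝ} (hf : Monotone f) {u : List (A × ℝ)}
    (hu : IsTimedWord u) (h0 : ∀ p ∈ u, 0 ≤ f p.2) : IsTimedWord (mapTW f u) := by
  constructor
  · intro p hp
    rw [mapTW, List.mem_map] at hp
    obtain ⟨q, hq, rfl⟩ := hp
    exact h0 q hq
  · have : (mapTW f u).map Prod.snd = (u.map Prod.snd).map f := by
      simp [mapTW, List.map_map, Function.comp]
    rw [this, List.Chain', List.isChain_map]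
    exact hu.2.imp fun a b hab => hf hab

lemma mem_mapTW {A : Type*} (f : ℝ → ℝ) {u : List (A × ℝ)} {p : A × ℝ} (hp : p ∈ u) :
    (p.1, f p.2) ∈ mapTW f u := by
  rw [mapTW, List.mem_map]
  exact ⟨p, hp, rfl⟩

lemma mapTW_mapTW {A : Type*} (f g : ℝ → ℝ) (u : List (A × ℝ)) :
    mapTW f (mapTW g u) = mapTW (fun x => f (g x)) u := by
  simp [mapTW, List.map_map, Function.comp]

lemma mapTW_congr {A : Type*} {f g : ℝ → ℝ} (h : ∀ x, f x = g x) (u : List (A × ℝ)) :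
    mapTW f u = mapTW g u := by
  unfold mapTW
  apply List.map_congr_left
  intro p _
  rw [h]


/-- linear interpolation between the identity and `π` -/
def scaleAut (π : ℝ → ℝ) (s : ℝ) (x : ℝ) : ℝ := x + s * (π x - x)

lemma scaleAut_strictMono {π : ℝ → ℝ} (hπ : StrictMono π) {s : ℝ}
    (hs0 : 0 ≤ s) (hs1 : s ≤ 1) : StrictMono (scaleAut π s) := by
  intro x y hxy
  unfold scaleAut
  rcases eq_or_lt_of_le hs0 with rfl | hs
  · simpa using hxy
  · have t1 := mul_pos hs (sub_pos.mpr (hπ hxy))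
    have t2 := mul_nonneg (by linarith : (0:ℝ) ≤ 1 - s)
      (by linarith : (0:ℝ) ≤ y - x)
    nlinarith [t1, t2]

lemma scaleAut_add_one {π : ℝ → ℝ} (hadd : ∀ x, π (x + 1) = π x + 1) (s x : ℝ) :
    scaleAut π s (x + 1) = scaleAut π s x + 1 := by
  unfold scaleAut
  rw [hadd]
  ring

lemma scaleAut_surjective {π : ℝ → ℝ} {M : ℝ} (hcont : Continuous π)
    (hbd : ∀ x, |π x - x| ≤ M) {s : ℝ} (hs0 : 0 ≤ s) (hs1 : s ≤ 1) :
    Function.Surjective (scaleAut π s) := by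
  have : scaleAut π s = fun x => x + (fun y => s * (π y - y)) x := rfl
  rw [this]
  apply tau_surjective (C := M)
  · exact continuous_const.mul (hcont.sub continuous_id)
  · intro x
    rw [abs_mul, abs_of_nonneg hs0]
    calc s * |π x - x| ≤ 1 * M :=
          mul_le_mul hs1 (hbd x) (abs_nonneg _) (by norm_num)
      _ = M := one_mul M

lemma scaleAut_fix {π : ℝ → ℝ} {t : ℝ} (h : π t = t) (s : ℝ) : scaleAut π s t = t := by
  unfold scaleAut
  rw [h]
  ring

lemma scaleAut_sub (π : ℝ → ℝ) (s₂ s₁ x : ℝ) :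
    scaleAut π s₂ x - scaleAut π s₁ x = (s₂ - s₁) * (π x - x) := by
  unfold scaleAut; ring

end TimedAux

open TimedAux Function

set_option maxHeartbeats 1000000 in
/-- The key "small displacement" lemma: there is an `ε > 0` such that every
`frac S ∩ frac S'`-automorphism displacing every point by at most `ε`
preserves membership in `L`. -/
lemma small_step {A : Type*} (S S' : Set ℝ) (hS : S.Finite) (hS' : S'.Finite)
    (L : Set (List (A × ℝ)))
    (h1 : SInvariantLang S L) (h2 : SInvariantLang S' L) :
    ∃ ε : ℝ, 0 < ε ∧ ∀ g : ℝ → ℝ,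
      IsSTimedAutomorphism (Int.fract '' S ∩ Int.fract '' S') g →
      (∀ x, |g x - x| ≤ ε) →
      ∀ u, IsTimedWord u → IsTimedWord (mapTW g u) → (u ∈ L ↔ mapTW g u ∈ L) := by
  classical
  -- the node set
  set F : Finset ℝ :=
    insert 0 ((hS.image Int.fract).toFinset ∪ (hS'.image Int.fract).toFinset) with hF
  have hF01 : ∀ p ∈ F, 0 ≤ p ∧ p < 1 := by
    intro p hp
    rw [hF, Finset.mem_insert, Finset.mem_union, Set.Finite.mem_toFinset,
      Set.Finite.mem_toFinset] at hp
    rcases hp with rfl | hp | hp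
    · exact ⟨le_refl 0, by norm_num⟩
    · obtain ⟨s, _, rfl⟩ := hp; exact ⟨Int.fract_nonneg s, Int.fract_lt_one s⟩
    · obtain ⟨s, _, rfl⟩ := hp; exact ⟨Int.fract_nonneg s, Int.fract_lt_one s⟩
  have h0F : (0:ℝ) ∈ F := Finset.mem_insert_self _ _
  have hfracSF : ∀ s ∈ S, Int.fract s ∈ F := by
    intro s hs
    rw [hF, Finset.mem_insert, Finset.mem_union, Set.Finite.mem_toFinset]
    exact Or.inr (Or.inl ⟨s, hs, rfl⟩)
  have hfracS'F : ∀ s ∈ S', Int.fract s ∈ F := by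
    intro s hs
    rw [hF, Finset.mem_insert, Finset.mem_union, Set.Finite.mem_toFinset,
      Set.Finite.mem_toFinset]
    exact Or.inr (Or.inr ⟨s, hs, rfl⟩)
  -- the separation constant
  set P : Finset ℝ :=
    ((F ×ˢ F).filter fun pq => pq.1 ≠ pq.2).image fun pq => distInt (pq.2 - pq.1) with hP
  set δ : ℝ := (insert (2⁻¹ : ℝ) P).min' ⟨2⁻¹, Finset.mem_insert_self _ _⟩ with hδdef
  have hδmem : δ ∈ insert (2⁻¹ : ℝ) P := Finset.min'_mem _ _
  have hδpos : 0 < δ := by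
    rw [Finset.mem_insert] at hδmem
    rcases hδmem with h | h
    · rw [h]; norm_num
    · rw [hP, Finset.mem_image] at h
      obtain ⟨pq, hpq, heq⟩ := h
      rw [← heq]
      rw [Finset.mem_filter, Finset.mem_product] at hpq
      obtain ⟨⟨hp1, hp2⟩, hne⟩ := hpq
      apply distInt_pos
      · exact sub_ne_zero.mpr (Ne.symm hne)
      · obtain ⟨h1a, h1b⟩ := hF01 _ hp1
        obtain ⟨h2a, h2b⟩ := hF01 _ hp2
        rw [abs_lt]; constructor <;> linarith
  have hsep : ∀ p ∈ F, ∀ q ∈ F, p ≠ q → δ ≤ distInt (q - p) := by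
    intro p hp q hq hne
    apply Finset.min'_le
    rw [Finset.mem_insert]
    right
    rw [hP, Finset.mem_image]
    exact ⟨(p, q), by rw [Finset.mem_filter, Finset.mem_product]; exact ⟨⟨hp, hq⟩, hne⟩, rfl⟩
  -- ε
  refine ⟨δ / (2 * (F.card + 1)), by positivity, ?_⟩
  intro g hg hgd u hu hgu
  obtain ⟨⟨hgbij, hgmono, hgadd⟩, hgfix⟩ := hg
  set ε : ℝ := δ / (2 * (F.card + 1)) with hεdef
  have hεpos : 0 < ε := by positivity
  have hcard : (F.card : ℝ) * ε ≤ δ / 2 := by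
    have h1 : (0:ℝ) < (F.card:ℝ) + 1 := by positivity
    have key : ∀ a D : ℝ, 0 < a + 1 → a * (D / (2*(a+1))) = D/2 * (a/(a+1)) := by
      intro a D ha
      have hne : a + 1 ≠ 0 := ne_of_gt ha
      field_simp
    have heq : (F.card:ℝ) * ε = δ/2 * ((F.card:ℝ)/((F.card:ℝ)+1)) := by
      rw [hεdef]; exact key _ δ h1
    rw [heq]
    have h2 : (F.card:ℝ)/((F.card:ℝ)+1) ≤ 1 := by
      rw [div_le_one h1]; linarith
    have h3 : (0:ℝ) ≤ δ/2 := by linarith [hδpos.le]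
    calc δ/2 * ((F.card:ℝ)/((F.card:ℝ)+1)) ≤ δ/2 * 1 := mul_le_mul_of_nonneg_left h2 h3
      _ = δ/2 := mul_one _
  -- coefficients
  set c : ℝ → ℝ := fun p => if p ∈ Int.fract '' S then g p - p else 0 with hc
  have hcbd : ∀ p ∈ F, |c p| ≤ ε := by
    intro p _
    by_cases hmem : p ∈ Int.fract '' S
    · show |(if p ∈ Int.fract '' S then g p - p else 0 : ℝ)| ≤ ε
      rw [if_pos hmem]; exact hgd p
    · show |(if p ∈ Int.fract '' S then g p - p else 0 : ℝ)| ≤ ε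
      rw [if_neg hmem]; simp [hεpos.le]
  -- the displacement and the automorphism τ
  set d : ℝ → ℝ := dd F δ c with hd
  set τ : ℝ → ℝ := fun x => x + d x with hτ
  have hdlip : ∀ x y : ℝ, |d y - d x| ≤ (1/2) * |y - x| := by
    intro x y
    calc |d y - d x| ≤ (F.card * ε / δ) * |y - x| := dd_lip F δ c hδpos hεpos.le hcbd x y
      _ ≤ (1/2) * |y - x| := by
          apply mul_le_mul_of_nonneg_right _ (abs_nonneg _)
          rw [div_le_iff₀ hδpos]
          linarith
  have hτmono : StrictMono τ := tau_strictMono hdlip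
  have hτsurj : Surjective τ :=
    tau_surjective (dd_continuous F δ c hδpos) (dd_bound F δ c hδpos hεpos.le hcbd)
  have hτadd : ∀ x, τ (x + 1) = τ x + 1 := by
    intro x
    rw [hτ]
    simp only []
    rw [hd, dd_add_one]
    ring
  have hdint : ∀ (x : ℝ) (n : ℤ), d (x + n) = d x := by
    intro x n
    exact periodic_add_int (fun y => by rw [hd, dd_add_one]) x n
  -- τ agrees with g on S
  have hτS : ∀ s ∈ S, τ s = g s := by
    intro s hs
    have h4 : s = Int.fract s + ((⌊s⌋ : ℤ) : ℝ) := (Int.fract_add_floor s).symm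
    have h1 : d s = c (Int.fract s) := by
      conv_lhs => rw [h4]
      rw [hdint, hd, dd_node F δ c hδpos hsep (hfracSF s hs)]
    have h2 : c (Int.fract s) = g (Int.fract s) - Int.fract s := by
      show (if Int.fract s ∈ Int.fract '' S then g (Int.fract s) - Int.fract s else 0 : ℝ)
        = g (Int.fract s) - Int.fract s
      rw [if_pos ⟨s, hs, rfl⟩]
    have h3 : g s = g (Int.fract s) + ((⌊s⌋ : ℤ) : ℝ) := by
      conv_lhs => rw [h4]
      exact map_add_int hgadd _ _
    rw [hτ]
    simp only []
    rw [h1, h2]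
    linarith
  -- τ fixes S'
  have hτS' : ∀ s ∈ S', τ s = s := by
    intro s hs
    have h4 : s = Int.fract s + ((⌊s⌋ : ℤ) : ℝ) := (Int.fract_add_floor s).symm
    have h1 : d s = c (Int.fract s) := by
      conv_lhs => rw [h4]
      rw [hdint, hd, dd_node F δ c hδpos hsep (hfracS'F s hs)]
    have h2 : c (Int.fract s) = 0 := by
      show (if Int.fract s ∈ Int.fract '' S then g (Int.fract s) - Int.fract s else 0 : ℝ) = 0
      by_cases hmem : Int.fract s ∈ Int.fract '' S
      · rw [if_pos hmem]
        have hmem2 : Int.fract s ∈ Int.fract '' S ∩ Int.fract '' S' :=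
          ⟨hmem, ⟨s, hs, rfl⟩⟩
        rw [hgfix _ hmem2]; ring
      · rw [if_neg hmem]
    rw [hτ]; simp only []; rw [h1, h2]; ring
  -- package τ as an order iso
  set e : ℝ ≃o ℝ := StrictMono.orderIsoOfSurjective τ hτmono hτsurj with he
  have hecoe : ∀ x, e x = τ x := fun x => rfl
  -- σ := τ⁻¹ ∘ g
  set σ : ℝ → ℝ := fun x => e.symm (g x) with hσ
  have hσmono : StrictMono σ := fun x y hxy => e.symm.strictMono (hgmono hxy)
  have hσbij : Bijective σ := by
    apply Bijective.comp _ hgbij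
    exact e.symm.bijective
  have hσadd : ∀ x, σ (x + 1) = σ x + 1 := by
    intro x
    rw [hσ]
    simp only []
    rw [hgadd, orderIso_symm_add_one e (fun y => hτadd y) (g x)]
  have hσfix : ∀ s ∈ S, σ s = s := by
    intro s hs
    rw [hσ]
    simp only []
    rw [← hτS s hs, ← hecoe]
    exact e.symm_apply_apply s
  have hcomp : ∀ x, τ (σ x) = g x := by
    intro x
    rw [hσ]
    simp only []
    exact e.apply_symm_apply (g x)
  -- nonnegativity of σ on relevant timestamps
  have hσ0 : ∀ t : ℝ, 0 ≤ t → 0 ≤ g t → 0 ≤ σ t := by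
    intro t ht hgt
    by_cases h0 : (0:ℝ) ∈ Int.fract '' S
    · obtain ⟨s₀, hs₀, hfs₀⟩ := h0
      have hσs₀ : σ s₀ = s₀ := hσfix s₀ hs₀
      have hs₀int : s₀ = ((⌊s₀⌋ : ℤ) : ℝ) := by
        have := Int.fract_add_floor s₀
        rw [hfs₀] at this
        linarith
      have hσ0eq : σ 0 = 0 := by
        have h1 : σ (0 + (⌊s₀⌋ : ℝ)) = σ 0 + (⌊s₀⌋ : ℝ) := map_add_int hσadd 0 ⌊s₀⌋
        rw [zero_add, ← hs₀int, hσs₀, hs₀int] at h1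
        linarith
      rw [← hσ0eq]
      exact (hσmono.monotone ht)
    · have hτ0 : τ 0 = 0 := by
        have h1 : d 0 = c 0 := by rw [hd]; exact dd_node F δ c hδpos hsep h0F
        have h2 : c 0 = 0 := by
          show (if (0:ℝ) ∈ Int.fract '' S then g 0 - 0 else 0 : ℝ) = 0
          rw [if_neg h0]
        rw [hτ]; simp only []; rw [h1, h2]; ring
      have : σ t = e.symm (g t) := rfl
      rw [this]
      have h3 : e.symm (τ 0) = 0 := by rw [← hecoe]; exact e.symm_apply_apply 0
      calc (0:ℝ) = e.symm (τ 0) := h3.symm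
        _ ≤ e.symm (g t) := e.symm.monotone (by rw [hτ0]; exact hgt)
  -- timed-word side conditions
  have hσu : IsTimedWord (mapTW σ u) := by
    apply isTimedWord_mapTW hσmono.monotone hu
    intro p hp
    apply hσ0 _ (hu.1 p hp)
    exact hgu.1 _ (mem_mapTW g hp)
  have hmapg : mapTW τ (mapTW σ u) = mapTW g u := by
    rw [mapTW_mapTW]
    exact mapTW_congr hcomp u
  -- apply the invariances
  have step1 : u ∈ L ↔ mapTW σ u ∈ L :=
    h1 σ ⟨⟨hσbij, hσmono, hσadd⟩, hσfix⟩ u hu hσu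
  have step2 : mapTW σ u ∈ L ↔ mapTW g u ∈ L := by
    rw [← hmapg]
    exact h2 τ ⟨⟨⟨hτmono.injective, hτsurj⟩, hτmono, hτadd⟩, hτS'⟩ (mapTW σ u) hσu
      (by rw [hmapg]; exact hgu)
  exact step1.trans step2

end TimedAuxSection

set_option maxHeartbeats 1000000 in
/-- If a timed language is both `S`-invariant and `S'`-invariant for finite
`S, S' ⊆ ℝ≥0`, then it is `S''`-invariant where `S'' = frac(S) ∩ frac(S')`. -/
theorem invariance_of_fract_intersection
    {A : Type*} (S S' : Set ℝ) (hS : S.Finite) (hS' : S'.Finite)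
    (hSpos : ∀ t ∈ S, 0 ≤ t) (hS'pos : ∀ t ∈ S', 0 ≤ t)
    (L : Set (List (A × ℝ))) (hL : ∀ w ∈ L, IsTimedWord w)
    (h1 : SInvariantLang S L) (h2 : SInvariantLang S' L) :
    SInvariantLang (Int.fract '' S ∩ Int.fract '' S') L := by
  intro π hπ w hw hπw
  obtain ⟨⟨hπbij, hπmono, hπadd⟩, hπfix⟩ := hπ
  have hπcont : Continuous π :=
    (StrictMono.orderIsoOfSurjective π hπmono hπbij.2).continuous
  -- global displacement bound for π
  set M : ℝ := |π 0| + 1 with hMdef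
  have hMpos : 0 < M := by positivity
  have hMbd : ∀ x : ℝ, |π x - x| ≤ M := by
    intro x
    have h4 : x = Int.fract x + ((⌊x⌋ : ℤ) : ℝ) := (Int.fract_add_floor x).symm
    have h5 : π x - x = π (Int.fract x) - Int.fract x := by
      conv_lhs => rw [h4]
      rw [TimedAux.map_add_int hπadd]
      ring
    rw [h5]
    have h6 : 0 ≤ Int.fract x := Int.fract_nonneg x
    have h7 : Int.fract x < 1 := Int.fract_lt_one x
    have h8 : π 0 ≤ π (Int.fract x) := hπmono.monotone h6
    have h9 : π (Int.fract x) < π 1 := hπmono h7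
    have h10 : π 1 = π 0 + 1 := by
      have := hπadd 0; rw [zero_add] at this; exact this
    have h11 := le_abs_self (π 0)
    have h12 := neg_abs_le (π 0)
    rw [abs_le, hMdef]
    constructor <;> linarith
  -- the small-step constant
  obtain ⟨ε, hεpos, hkey⟩ := small_step S S' hS hS' L h1 h2
  obtain ⟨n, hn⟩ := exists_nat_gt (M / ε)
  have hn0R : (0:ℝ) < n := lt_trans (by positivity) hn
  have hn0 : 0 < n := by exact_mod_cast hn0R
  have hMn : M ≤ (n:ℝ) * ε := by
    have := (div_lt_iff₀ hεpos).mp hn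
    linarith
  have hπw2 : ∀ p ∈ w, 0 ≤ π p.2 := fun p hp => hπw.1 _ (TimedAux.mem_mapTW π hp)
  -- the interpolated words are timed words
  have hws : ∀ s : ℝ, 0 ≤ s → s ≤ 1 → IsTimedWord (mapTW (TimedAux.scaleAut π s) w) := by
    intro s hs0 hs1
    apply TimedAux.isTimedWord_mapTW (TimedAux.scaleAut_strictMono hπmono hs0 hs1).monotone hw
    intro p hp
    have ht := hw.1 p hp
    have hπt := hπw2 p hp
    unfold TimedAux.scaleAut
    nlinarith [mul_nonneg hs0 hπt, mul_nonneg (by linarith : (0:ℝ) ≤ 1 - s) ht]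
  have hfrac : ∀ i : ℕ, i ≤ n → 0 ≤ (i:ℝ)/n ∧ (i:ℝ)/n ≤ 1 := by
    intro i hi
    constructor
    · positivity
    · rw [div_le_one hn0R]; exact_mod_cast hi
  -- induction along the interpolation
  have key : ∀ i : ℕ, i ≤ n → (w ∈ L ↔ mapTW (TimedAux.scaleAut π ((i:ℝ)/n)) w ∈ L) := by
    intro i
    induction i with
    | zero =>
      intro _
      have h0 : ∀ x : ℝ, TimedAux.scaleAut π (((0:ℕ):ℝ)/n) x = x := by
        intro x; unfold TimedAux.scaleAut; simp
      have : mapTW (TimedAux.scaleAut π (((0:ℕ):ℝ)/n)) w = w := by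
        rw [TimedAux.mapTW_congr h0 w]
        simp [mapTW]
      rw [this]
    | succ i ih =>
      intro hin
      have hi : i ≤ n := Nat.le_of_succ_le hin
      specialize ih hi
      set s1 : ℝ := (i:ℝ)/n with hs1def
      set s2 : ℝ := ((i+1:ℕ):ℝ)/n with hs2def
      obtain ⟨hs1a, hs1b⟩ := hfrac i hi
      obtain ⟨hs2a, hs2b⟩ := hfrac (i+1) hin
      have hmono1 := TimedAux.scaleAut_strictMono hπmono hs1a hs1b
      have hsurj1 := TimedAux.scaleAut_surjective hπcont hMbd hs1a hs1b
      have hmono2 := TimedAux.scaleAut_strictMono hπmono hs2a hs2b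
      have hsurj2 := TimedAux.scaleAut_surjective hπcont hMbd hs2a hs2b
      set e1 : ℝ ≃o ℝ := StrictMono.orderIsoOfSurjective _ hmono1 hsurj1 with he1
      have he1coe : ∀ x, e1 x = TimedAux.scaleAut π s1 x := fun x => rfl
      set g : ℝ → ℝ := fun x => TimedAux.scaleAut π s2 (e1.symm x) with hg
      have hgmono : StrictMono g := fun x y hxy => hmono2 (e1.symm.strictMono hxy)
      have hgbij : Function.Bijective g :=
        Function.Bijective.comp ⟨hmono2.injective, hsurj2⟩ e1.symm.bijective
      have hgadd : ∀ x, g (x + 1) = g x + 1 := by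
        intro x
        rw [hg]
        simp only []
        rw [TimedAux.orderIso_symm_add_one e1
          (fun y => TimedAux.scaleAut_add_one hπadd s1 y) x]
        rw [TimedAux.scaleAut_add_one hπadd]
      have hgfix : ∀ t ∈ Int.fract '' S ∩ Int.fract '' S', g t = t := by
        intro t ht
        have hfix := hπfix t ht
        have h1 : e1.symm t = t := by
          have : e1 t = t := TimedAux.scaleAut_fix hfix s1
          conv_lhs => rw [← this]
          exact e1.symm_apply_apply t
        rw [hg]
        simp only []
        rw [h1]
        exact TimedAux.scaleAut_fix hfix s2
      have hgdisp : ∀ x, |g x - x| ≤ ε := by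
        intro x
        have hux : TimedAux.scaleAut π s1 (e1.symm x) = x := e1.apply_symm_apply x
        have h2 : g x - x = (s2 - s1) * (π (e1.symm x) - e1.symm x) := by
          have h := TimedAux.scaleAut_sub π s2 s1 (e1.symm x)
          rw [hux] at h
          exact h
        rw [h2, abs_mul]
        have h3 : s2 - s1 = 1/(n:ℝ) := by
          rw [hs2def, hs1def]
          push_cast
          field_simp
          ring
        rw [h3]
        have h4 : |(1:ℝ)/(n:ℝ)| = 1/(n:ℝ) := abs_of_pos (by positivity)
        rw [h4]
        calc 1/(n:ℝ) * |π (e1.symm x) - e1.symm x| ≤ 1/(n:ℝ) * M := by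
              apply mul_le_mul_of_nonneg_left (hMbd _) (by positivity)
          _ ≤ ε := by
              rw [div_mul_eq_mul_div, one_mul, div_le_iff₀ hn0R]
              linarith
      have hgw : mapTW g (mapTW (TimedAux.scaleAut π s1) w)
          = mapTW (TimedAux.scaleAut π s2) w := by
        rw [TimedAux.mapTW_mapTW]
        apply TimedAux.mapTW_congr
        intro x
        show TimedAux.scaleAut π s2 (e1.symm (TimedAux.scaleAut π s1 x))
          = TimedAux.scaleAut π s2 x
        congr 1
        exact e1.symm_apply_apply x
      have hstep := hkey g ⟨⟨hgbij, hgmono, hgadd⟩, hgfix⟩ hgdisp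
        (mapTW (TimedAux.scaleAut π s1) w) (hws s1 hs1a hs1b)
        (by rw [hgw]; exact hws s2 hs2a hs2b)
      rw [hgw] at hstep
      exact ih.trans hstep
  have hfin := key n (le_refl n)
  have h1n : ((n:ℕ):ℝ)/(n:ℝ) = 1 := div_self (ne_of_gt hn0R)
  rw [h1n] at hfin
  have hfinal : mapTW (TimedAux.scaleAut π 1) w = mapTW π w := by
    apply TimedAux.mapTW_congr
    intro x
    unfold TimedAux.scaleAut
    ring
  rw [hfinal] at hfin
  exact hfin
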